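/- Let f₄ be a symmetric 4-linear form on ℝⁿ with f₄[x,x,y,y] ≥ 0 for all x, y and f₄[x,x,x,x] > 0 for x ≠ 0. Define d(x)=f₄[x,x,x,x] and Q(x) = (1/2) d(x)^{1/2}. Then for every x ≠ 0 and every h: ∇²Q(x)[h,h] ≥ d(x)^{-1/2} f₄[x,x,h,h], i.e., ∇²Q(x)[h,h] ≥ (1/(12 ‖x‖_f²)) ∇²d(x)[h,h]. -/

import Mathlib

open Topology
set_option maxHeartbeats 1000000
/-- For a positive definite, biquadratically nonnegative symmetric 4-linear form `f₄`,
the function `Q(x) = (1/2)(f₄[x]⁴)^{1/2}` satisfies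
`∇²Q(x)[h,h] ≥ d(x)^{-1/2} f₄[x,x,h,h]` for every `x ≠ 0` and every `h`. -/
theorem quartic_norm_sq_hessian_lower {n : ℕ}
    (f4 : MultilinearMap ℝ (fun _ : Fin 4 => EuclideanSpace ℝ (Fin n)) ℝ)
    (hsymm : ∀ (v : Fin 4 → EuclideanSpace ℝ (Fin n)) (σ : Equiv.Perm (Fin 4)),
      f4 (v ∘ σ) = f4 v)
    (hpos : ∀ x y : EuclideanSpace ℝ (Fin n), 0 ≤ f4 ![x, x, y, y])
    (hpd : ∀ x : EuclideanSpace ℝ (Fin n), x ≠ 0 → 0 < f4 ![x, x, x, x])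
    (Q : EuclideanSpace ℝ (Fin n) → ℝ)
    (hQ : ∀ x, Q x = (1 / 2) * Real.sqrt (f4 ![x, x, x, x])) :
    ∀ x : EuclideanSpace ℝ (Fin n), x ≠ 0 → ∀ h : EuclideanSpace ℝ (Fin n),
      iteratedFDeriv ℝ 2 Q x ![h, h] ≥ f4 ![x, x, h, h] / Real.sqrt (f4 ![x, x, x, x]) := by
  classical
  -- continuity of `f4`
  have hcont : Continuous f4 := by
    have hrep : ⇑f4 = fun v : Fin 4 → EuclideanSpace ℝ (Fin n) => ∑ j : Fin 4 → Fin n,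
        (∏ i, v i (j i)) • f4 (fun i => EuclideanSpace.single (j i) (1:ℝ)) := by
      funext v
      have hv : v = fun i => ∑ k : Fin n, v i k • EuclideanSpace.single k (1:ℝ) := by
        funext i
        have := (EuclideanSpace.basisFun (Fin n) ℝ).sum_repr (v i)
        simpa [EuclideanSpace.basisFun_apply, EuclideanSpace.basisFun_repr] using this.symm
      conv_lhs => rw [hv]
      rw [f4.map_sum]
      exact Finset.sum_congr rfl fun j _ => by rw [f4.map_smul_univ]
    rw [hrep]
    refine continuous_finset_sum _ fun j _ => Continuous.fun_smul ?_ continuous_const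
    exact continuous_finset_prod _ fun i _ =>
      ((EuclideanSpace.proj (j i) : EuclideanSpace ℝ (Fin n) →L[ℝ] ℝ).continuous).comp
        (continuous_apply i)
  set F : ContinuousMultilinearMap ℝ (fun _ : Fin 4 => EuclideanSpace ℝ (Fin n)) ℝ :=
    ⟨f4, hcont⟩ with hFdef
  have hFapp : ∀ v, F v = f4 v := fun _ => rfl
  let C : ContinuousMultilinearMap ℝ (fun _ : Fin 3 => EuclideanSpace ℝ (Fin n))
      (EuclideanSpace ℝ (Fin n) →L[ℝ] ℝ) := F.curryRight
  have hCapp : ∀ (m : Fin 3 → EuclideanSpace ℝ (Fin n)) (u : EuclideanSpace ℝ (Fin n)),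
      C m u = f4 (Fin.snoc m u) := fun m u => by
    simp [C, ContinuousMultilinearMap.curryRight_apply, hFapp]
  let Δ3 : EuclideanSpace ℝ (Fin n) →L[ℝ] (Fin 3 → EuclideanSpace ℝ (Fin n)) :=
    ContinuousLinearMap.pi fun _ => ContinuousLinearMap.id ℝ _
  let Δ4 : EuclideanSpace ℝ (Fin n) →L[ℝ] (Fin 4 → EuclideanSpace ℝ (Fin n)) :=
    ContinuousLinearMap.pi fun _ => ContinuousLinearMap.id ℝ _
  have hDd : ∀ y : EuclideanSpace ℝ (Fin n),
      HasFDerivAt (fun z : EuclideanSpace ℝ (Fin n) => F (fun _ => z))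
        ((F.linearDeriv (fun _ => y)).comp Δ4) y := fun y =>
    (F.hasFDerivAt (fun _ => y)).comp y Δ4.hasFDerivAt
  have hDC : ∀ y : EuclideanSpace ℝ (Fin n),
      HasFDerivAt (fun z : EuclideanSpace ℝ (Fin n) => C (fun _ => z))
        ((C.linearDeriv (fun _ => y)).comp Δ3) y := fun y =>
    (C.hasFDerivAt (fun _ => y)).comp y Δ3.hasFDerivAt
  -- symmetry helpers
  have key : ∀ (v w : Fin 4 → EuclideanSpace ℝ (Fin n)) (σ : Equiv.Perm (Fin 4)),
      w = v ∘ σ → f4 w = f4 v := fun v w σ hw => hw ▸ hsymm v σ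
  have hdiag4 : ∀ y : EuclideanSpace ℝ (Fin n), (fun _ : Fin 4 => y) = ![y, y, y, y] := by
    intro y; funext i; fin_cases i <;> rfl
  have hupd4 : ∀ (y u : EuclideanSpace ℝ (Fin n)) (i : Fin 4),
      f4 (Function.update (fun _ : Fin 4 => y) i u) = f4 ![y, y, y, u] := by
    intro y u i
    refine key ![y, y, y, u] _ (Equiv.swap i 3) ?_
    funext j
    fin_cases i <;> fin_cases j <;>
      simp +decide [Equiv.swap_apply_def, Function.update_apply]
  have hsnoc : ∀ (y u : EuclideanSpace ℝ (Fin n)),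
      (Fin.snoc (fun _ : Fin 3 => y) u : Fin 4 → EuclideanSpace ℝ (Fin n)) = ![y, y, y, u] := by
    intro y u
    funext j
    fin_cases j <;> simp [Fin.snoc]
  have hupd3 : ∀ (y u : EuclideanSpace ℝ (Fin n)) (i : Fin 3),
      f4 (Fin.snoc (Function.update (fun _ : Fin 3 => y) i u) u) = f4 ![y, y, u, u] := by
    intro y u i
    fin_cases i
    · refine key ![y, y, u, u] _ (Equiv.swap 0 2) ?_
      funext j
      fin_cases j <;> simp +decide [Fin.snoc, Equiv.swap_apply_def, Function.update_apply, Fin.castLT]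
    · refine key ![y, y, u, u] _ (Equiv.swap 1 2) ?_
      funext j
      fin_cases j <;> simp +decide [Fin.snoc, Equiv.swap_apply_def, Function.update_apply, Fin.castLT]
    · refine key ![y, y, u, u] _ (Equiv.refl _) ?_
      funext j
      fin_cases j <;> simp +decide [Fin.snoc, Equiv.swap_apply_def, Function.update_apply, Fin.castLT]
  have hswap23 : ∀ (y u : EuclideanSpace ℝ (Fin n)), f4 ![y, y, u, y] = f4 ![y, y, y, u] := by
    intro y u
    refine key ![y, y, y, u] _ (Equiv.swap 2 3) ?_
    funext j
    fin_cases j <;> simp +decide [Equiv.swap_apply_def]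
  have hdiagF : ∀ y : EuclideanSpace ℝ (Fin n),
      F (fun _ : Fin 4 => y) = f4 ![y, y, y, y] := by
    intro y; rw [hFapp, hdiag4]
  -- the first derivative of Q away from 0
  set G : EuclideanSpace ℝ (Fin n) → (EuclideanSpace ℝ (Fin n) →L[ℝ] ℝ) :=
    fun z => (Real.sqrt (F (fun _ : Fin 4 => z)))⁻¹ • C (fun _ => z) with hGdef
  have hsum4 : ∀ (y u : EuclideanSpace ℝ (Fin n)),
      ((F.linearDeriv (fun _ : Fin 4 => y)).comp Δ4) u = 4 * f4 ![y, y, y, u] := by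
    intro y u
    have hΔ4 : Δ4 u = fun _ : Fin 4 => u := rfl
    rw [ContinuousLinearMap.comp_apply, hΔ4, ContinuousMultilinearMap.linearDeriv_apply]
    simp only [hFapp]
    rw [Fin.sum_univ_four, hupd4, hupd4, hupd4, hupd4]
    ring
  have hQderiv : ∀ y : EuclideanSpace ℝ (Fin n), y ≠ 0 → HasFDerivAt Q (G y) y := by
    intro y hy
    have hdy : (0:ℝ) < f4 ![y, y, y, y] := hpd y hy
    have hdne : F (fun _ : Fin 4 => y) ≠ 0 := by rw [hdiagF]; exact ne_of_gt hdy
    have h1 : HasFDerivAt (fun z : EuclideanSpace ℝ (Fin n) => Real.sqrt (F (fun _ => z)))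
        ((1 / (2 * Real.sqrt (F (fun _ : Fin 4 => y)))) •
          ((F.linearDeriv (fun _ => y)).comp Δ4)) y := (hDd y).sqrt hdne
    have hQeq : Q = fun z : EuclideanSpace ℝ (Fin n) =>
        (1 / 2 : ℝ) * Real.sqrt (F (fun _ : Fin 4 => z)) := by
      funext z; rw [hQ z, hdiagF z]
    have h2 := h1.const_mul (1 / 2 : ℝ)
    rw [← hQeq] at h2
    refine h2.congr_fderiv ?_
    ext u
    simp only [ContinuousLinearMap.smul_apply, smul_eq_mul, hGdef]
    rw [hsum4 y u, hCapp, hsnoc, hdiagF]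
    have hs : (0:ℝ) < Real.sqrt (f4 ![y, y, y, y]) := Real.sqrt_pos.mpr hdy
    field_simp
    ring
  -- second derivative data at x
  intro x hx h
  have hdx : (0:ℝ) < f4 ![x, x, x, x] := hpd x hx
  have hdne : F (fun _ : Fin 4 => x) ≠ 0 := by rw [hdiagF]; exact ne_of_gt hdx
  have hsq : HasFDerivAt (fun z : EuclideanSpace ℝ (Fin n) => Real.sqrt (F (fun _ => z)))
      ((1 / (2 * Real.sqrt (F (fun _ : Fin 4 => x)))) •
        ((F.linearDeriv (fun _ => x)).comp Δ4)) x := (hDd x).sqrt hdne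
  have hsqne : Real.sqrt (F (fun _ : Fin 4 => x)) ≠ 0 := by
    rw [hdiagF]; exact ne_of_gt (Real.sqrt_pos.mpr hdx)
  have hinv : HasFDerivAt
      (fun z : EuclideanSpace ℝ (Fin n) => (Real.sqrt (F (fun _ : Fin 4 => z)))⁻¹)
      ((-((Real.sqrt (F (fun _ : Fin 4 => x))) ^ 2)⁻¹) •
        ((1 / (2 * Real.sqrt (F (fun _ : Fin 4 => x)))) •
          ((F.linearDeriv (fun _ => x)).comp Δ4))) x :=
    (hasDerivAt_inv hsqne).comp_hasFDerivAt x hsq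
  have hprod : HasFDerivAt G
      ((Real.sqrt (F (fun _ : Fin 4 => x)))⁻¹ • ((C.linearDeriv (fun _ => x)).comp Δ3) +
        ((-((Real.sqrt (F (fun _ : Fin 4 => x))) ^ 2)⁻¹) •
          ((1 / (2 * Real.sqrt (F (fun _ : Fin 4 => x)))) •
            ((F.linearDeriv (fun _ => x)).comp Δ4))).smulRight (C (fun _ => x))) x :=
    hinv.smul (hDC x)
  have hev : fderiv ℝ Q =ᶠ[𝓝 x] G := by
    filter_upwards [eventually_ne_nhds hx] with y hy
    exact (hQderiv y hy).fderiv
  have hQ2 : fderiv ℝ (fderiv ℝ Q) x =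
      (Real.sqrt (F (fun _ : Fin 4 => x)))⁻¹ • ((C.linearDeriv (fun _ => x)).comp Δ3) +
        ((-((Real.sqrt (F (fun _ : Fin 4 => x))) ^ 2)⁻¹) •
          ((1 / (2 * Real.sqrt (F (fun _ : Fin 4 => x)))) •
            ((F.linearDeriv (fun _ => x)).comp Δ4))).smulRight (C (fun _ => x)) := by
    rw [hev.fderiv_eq]
    exact hprod.fderiv
  -- evaluate the Hessian at (h, h)
  have e1 : ((C.linearDeriv (fun _ : Fin 3 => x)).comp Δ3) h h = 3 * f4 ![x, x, h, h] := by
    have hΔ3 : Δ3 h = fun _ : Fin 3 => h := rfl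
    rw [ContinuousLinearMap.comp_apply, hΔ3, ContinuousMultilinearMap.linearDeriv_apply]
    rw [ContinuousLinearMap.sum_apply, Fin.sum_univ_three]
    rw [hCapp, hCapp, hCapp, hupd3, hupd3, hupd3]
    ring
  have e3 : C (fun _ : Fin 3 => x) h = f4 ![x, x, x, h] := by rw [hCapp, hsnoc]
  have hMhh : iteratedFDeriv ℝ 2 Q x ![h, h] =
      (Real.sqrt (f4 ![x, x, x, x]))⁻¹ * (3 * f4 ![x, x, h, h]) +
        (-((Real.sqrt (f4 ![x, x, x, x])) ^ 2)⁻¹ *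
          ((1 / (2 * Real.sqrt (f4 ![x, x, x, x]))) * (4 * f4 ![x, x, x, h]))) *
            f4 ![x, x, x, h] := by
    rw [iteratedFDeriv_two_apply, hQ2]
    have h0 : (![h, h] : Fin 2 → EuclideanSpace ℝ (Fin n)) 0 = h := rfl
    have h1 : (![h, h] : Fin 2 → EuclideanSpace ℝ (Fin n)) 1 = h := rfl
    rw [h0, h1]
    simp only [ContinuousLinearMap.add_apply, ContinuousLinearMap.smul_apply,
      ContinuousLinearMap.smulRight_apply, smul_eq_mul]
    rw [e1, e3, hsum4 x h, hdiagF]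
  -- Cauchy–Schwarz for the bilinear form f4[x,x,·,·]
  have upd2 : ∀ a z : EuclideanSpace ℝ (Fin n),
      Function.update ![x, x, a, z] 2 = fun b => ![x, x, b, z] := by
    intro a z
    funext b j
    fin_cases j <;> simp +decide [Function.update_apply]
  have upd3' : ∀ a z : EuclideanSpace ℝ (Fin n),
      Function.update ![x, x, a, z] 3 = fun b => ![x, x, a, b] := by
    intro a z
    funext b j
    fin_cases j <;> simp +decide [Function.update_apply]
  have add2 : ∀ a b z : EuclideanSpace ℝ (Fin n),
      f4 ![x, x, a + b, z] = f4 ![x, x, a, z] + f4 ![x, x, b, z] := by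
    intro a b z
    have := f4.map_update_add ![x, x, a, z] 2 a b
    simpa [upd2 a z] using this
  have smul2 : ∀ (t : ℝ) (a z : EuclideanSpace ℝ (Fin n)),
      f4 ![x, x, t • a, z] = t * f4 ![x, x, a, z] := by
    intro t a z
    have := f4.map_update_smul ![x, x, a, z] 2 t a
    simpa [upd2 a z] using this
  have add3 : ∀ a b z : EuclideanSpace ℝ (Fin n),
      f4 ![x, x, z, a + b] = f4 ![x, x, z, a] + f4 ![x, x, z, b] := by
    intro a b z
    have := f4.map_update_add ![x, x, z, a] 3 a b
    simpa [upd3' z a] using this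
  have smul3 : ∀ (t : ℝ) (a z : EuclideanSpace ℝ (Fin n)),
      f4 ![x, x, z, t • a] = t * f4 ![x, x, z, a] := by
    intro t a z
    have := f4.map_update_smul ![x, x, z, a] 3 t a
    simpa [upd3' z a] using this
  have hquad : ∀ t : ℝ, 0 ≤ f4 ![x, x, x, x] * (t * t) +
      (2 * f4 ![x, x, x, h]) * t + f4 ![x, x, h, h] := by
    intro t
    have h0 := hpos x (t • x + h)
    have hexp : f4 ![x, x, t • x + h, t • x + h]
        = f4 ![x, x, x, x] * (t * t) + (2 * f4 ![x, x, x, h]) * t + f4 ![x, x, h, h] := by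
      rw [add2, smul2, add3, add3, smul3, smul3, hswap23 x h]
      ring
    linarith [hexp ▸ h0]
  have hCS : (f4 ![x, x, x, h]) ^ 2 ≤ f4 ![x, x, x, x] * f4 ![x, x, h, h] := by
    have hd := discrim_le_zero hquad
    rw [discrim] at hd
    nlinarith [hd]
  -- final arithmetic
  have hrpos : (0:ℝ) < Real.sqrt (f4 ![x, x, x, x]) := Real.sqrt_pos.mpr hdx
  have hr2 : (Real.sqrt (f4 ![x, x, x, x])) ^ 2 = f4 ![x, x, x, x] := Real.sq_sqrt hdx.le
  rw [hMhh, ge_iff_le]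
  set r := Real.sqrt (f4 ![x, x, x, x]) with hrdef
  set b := f4 ![x, x, h, h] with hbdef
  set s := f4 ![x, x, x, h] with hsdef
  have hkey : s ^ 2 ≤ r ^ 2 * b := by rw [hr2]; exact hCS
  have expand : r⁻¹ * (3 * b) + (-(r ^ 2)⁻¹ * ((1 / (2 * r)) * (4 * s))) * s
      = (3 * b * r ^ 2 - 2 * s ^ 2) / r ^ 3 := by
    field_simp
    ring
  have expand2 : b / r = (b * r ^ 2) / r ^ 3 := by
    field_simp
  rw [expand, expand2, div_le_div_iff₀ (by positivity) (by positivity)]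
  nlinarith [mul_nonneg (by positivity : (0:ℝ) ≤ r ^ 3) (sub_nonneg.mpr hkey)]
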